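/- Let Y : [τ, ∞) → ℝ be continuous, C ≥ 0, δ' > 0, and l : [τ,∞) → ℝ≥0 locally integrable. If Y(t) ≤ C + ∫_τ^t e^{-δ'(t-s)} l(s) Y(s) ds for all t ≥ τ, then Y(t) ≤ C·(1 + ∫_τ^t e^{-δ'(t-s) + ∫_s^t l(κ)dκ} l(s) ds) for all t ≥ τ. -/

import Mathlib

open MeasureTheory Set intervalIntegral


/-- Continuous induction principle with an error modulus. -/
lemma gronwall_cont_ind {D M : ℝ → ℝ} {a b : ℝ} (hab : a ≤ b)
    (hD : Continuous D) (hM : Continuous M)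
    (hDa : D a ≤ 0) (hK : 0 ≤ M b - M a)
    (step : ∀ ε : ℝ, 0 < ε → ∀ u ∈ Set.Ico a b, ∃ δ > 0, ∀ w ∈ Set.Ioc u (u + δ),
        w ≤ b → D w - D u ≤ ε * (M w - M u)) :
    D b ≤ 0 := by
  have key : ∀ ε : ℝ, 0 < ε → D b ≤ D a + ε * (M b - M a) := by
    intro ε hε
    set s : Set ℝ := {u | D u - ε * M u ≤ D a - ε * M a} with hs_def
    have hs_closed : IsClosed s :=
      isClosed_le (hD.sub (continuous_const.mul hM)) continuous_const
    have hmem : Set.Icc a b ⊆ s := by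
      apply (hs_closed.inter isClosed_Icc).Icc_subset_of_forall_exists_gt
      · show D a - ε * M a ≤ D a - ε * M a
        exact le_refl _
      · rintro x ⟨hxs, hxa, hxb⟩ y hy
        obtain ⟨δ, hδ, hstep⟩ := step ε hε x ⟨hxa, hxb⟩
        refine ⟨min (x + δ) (min y b), ?_, ?_, ?_⟩
        · have hxv : x < min (x + δ) (min y b) := lt_min (by linarith) (lt_min hy hxb)
          have h1 : min (x + δ) (min y b) ∈ Set.Ioc x (x + δ) := ⟨hxv, min_le_left _ _⟩
          have h2 : min (x + δ) (min y b) ≤ b := le_trans (min_le_right _ _) (min_le_right _ _)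
          have h3 := hstep _ h1 h2
          have hxs' : D x - ε * M x ≤ D a - ε * M a := hxs
          show D _ - ε * M _ ≤ D a - ε * M a
          nlinarith [h3]
        · exact lt_min (by linarith) (lt_min hy hxb)
        · exact le_trans (min_le_right _ _) (min_le_left _ _)
    have hb : b ∈ s := hmem (Set.right_mem_Icc.2 hab)
    have : D b - ε * M b ≤ D a - ε * M a := hb
    linarith
  by_contra hpos
  push_neg at hpos
  have hK1 : (0:ℝ) < M b - M a + 1 := by linarith
  have h2 := key (D b / (2 * (M b - M a + 1))) (by positivity)
  have h3 : D b / (2 * (M b - M a + 1)) * (M b - M a) < D b := by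
    rw [div_mul_eq_mul_div, div_lt_iff₀ (by positivity)]
    nlinarith
  linarith


lemma gronwall_primitive_sub {f : ℝ → ℝ}
    (hfi : ∀ a b, IntervalIntegrable f volume a b) (a u v : ℝ) :
    (∫ s in a..v, f s) - ∫ s in a..u, f s = ∫ s in u..v, f s := by
  have h := integral_add_adjacent_intervals (hfi a u) (hfi u v)
  linarith

lemma gronwall_primitive_mono {f : ℝ → ℝ} (hf : ∀ s, 0 ≤ f s)
    (hfi : ∀ a b, IntervalIntegrable f volume a b) (a : ℝ) :
    Monotone (fun u => ∫ s in a..u, f s) := by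
  intro u v huv
  have h1 := gronwall_primitive_sub hfi a u v
  have h2 : 0 ≤ ∫ s in u..v, f s := integral_nonneg huv fun x _ => hf x
  simp only
  linarith

/-- Lemma A: `∫_σ^t l e^{L} ≤ e^{L t} - 1` where `L u = ∫_σ^u l`. -/
lemma gronwall_exp_primitive_le {l : ℝ → ℝ} (hl : ∀ s, 0 ≤ l s)
    (hli : ∀ a b, IntervalIntegrable l volume a b) {σ t : ℝ} (hσt : σ ≤ t) :
    (∫ s in σ..t, l s * Real.exp (∫ κ in σ..s, l κ))
      ≤ Real.exp (∫ κ in σ..t, l κ) - 1 := by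
  have hLc : Continuous fun u => ∫ κ in σ..u, l κ := continuous_primitive hli σ
  have hLmono : Monotone fun u => ∫ κ in σ..u, l κ := gronwall_primitive_mono hl hli σ
  have hEc : Continuous fun u => Real.exp (∫ κ in σ..u, l κ) := Real.continuous_exp.comp hLc
  have hfi : ∀ a b, IntervalIntegrable (fun s => l s * Real.exp (∫ κ in σ..s, l κ)) volume a b :=
    fun a b => (hli a b).mul_continuousOn hEc.continuousOn
  have hD : (fun u => (∫ s in σ..u, l s * Real.exp (∫ κ in σ..s, l κ))
      - Real.exp (∫ κ in σ..u, l κ) + 1) t ≤ 0 := by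
    apply gronwall_cont_ind (M := fun u => ∫ κ in σ..u, l κ) hσt
      (((continuous_primitive hfi σ).sub hEc).add continuous_const) hLc
    · simp
    · simpa using sub_nonneg.2 (hLmono hσt)
    · intro ε hε u hu
      have hc : ContinuousAt (fun u => Real.exp (∫ κ in σ..u, l κ)) u := hEc.continuousAt
      rw [Metric.continuousAt_iff] at hc
      obtain ⟨δ, hδ, hball⟩ := hc ε hε
      refine ⟨δ / 2, by linarith, ?_⟩
      intro w hw hwb
      have huw : u ≤ w := hw.1.le
      have hdist : dist w u < δ := by
        rw [Real.dist_eq, abs_of_nonneg (by linarith [hw.1])]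
        linarith [hw.2]
      have hexp : Real.exp (∫ κ in σ..w, l κ) - Real.exp (∫ κ in σ..u, l κ) ≤ ε := by
        have := hball hdist
        rw [Real.dist_eq] at this
        exact (le_abs_self _).trans this.le
      have hsplit := gronwall_primitive_sub hfi σ u w
      have hLsplit := gronwall_primitive_sub hli σ u w
      have hLuw : 0 ≤ (∫ κ in σ..w, l κ) - ∫ κ in σ..u, l κ := sub_nonneg.2 (hLmono huw)
      have hb1 : (∫ s in u..w, l s * Real.exp (∫ κ in σ..s, l κ))
          ≤ Real.exp (∫ κ in σ..w, l κ) * ((∫ κ in σ..w, l κ) - ∫ κ in σ..u, l κ) := by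
        have hmono : (∫ s in u..w, l s * Real.exp (∫ κ in σ..s, l κ))
            ≤ ∫ s in u..w, l s * Real.exp (∫ κ in σ..w, l κ) := by
          refine integral_mono_on huw (hfi u w) ((hli u w).mul_const _) ?_
          intro x hx
          exact mul_le_mul_of_nonneg_left (Real.exp_le_exp.2 (hLmono hx.2)) (hl x)
        rw [intervalIntegral.integral_mul_const] at hmono
        rw [← hLsplit] at hmono
        linarith [hmono]
      have hb2 : Real.exp (∫ κ in σ..u, l κ) * ((∫ κ in σ..w, l κ) - ∫ κ in σ..u, l κ)
          ≤ Real.exp (∫ κ in σ..w, l κ) - Real.exp (∫ κ in σ..u, l κ) := by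
        have h1 := Real.add_one_le_exp ((∫ κ in σ..w, l κ) - ∫ κ in σ..u, l κ)
        have h2 : Real.exp (∫ κ in σ..w, l κ)
            = Real.exp (∫ κ in σ..u, l κ)
              * Real.exp ((∫ κ in σ..w, l κ) - ∫ κ in σ..u, l κ) := by
          rw [← Real.exp_add]; ring_nf
        nlinarith [Real.exp_pos (∫ κ in σ..u, l κ)]
      simp only [Pi.add_apply, Pi.sub_apply]
      nlinarith [mul_le_mul_of_nonneg_right hexp hLuw]
  have hD' : (∫ s in σ..t, l s * Real.exp (∫ κ in σ..s, l κ))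
      - Real.exp (∫ κ in σ..t, l κ) + 1 ≤ 0 := hD
  linarith

/-- Lemma A': base-shifted version. -/
lemma gronwall_exp_primitive_le' {l : ℝ → ℝ} (hl : ∀ s, 0 ≤ l s)
    (hli : ∀ a b, IntervalIntegrable l volume a b) {τ σ t : ℝ} (hτσ : τ ≤ σ) (hσt : σ ≤ t) :
    (∫ s in σ..t, l s * Real.exp (∫ κ in τ..s, l κ))
      ≤ Real.exp (∫ κ in τ..t, l κ) - Real.exp (∫ κ in τ..σ, l κ) := by
  have key := gronwall_exp_primitive_le hl hli hσt
  have hsplit : ∀ s : ℝ, (∫ κ in τ..s, l κ) = (∫ κ in τ..σ, l κ) + ∫ κ in σ..s, l κ :=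
    fun s => (integral_add_adjacent_intervals (hli τ σ) (hli σ s)).symm
  have heq : (∫ s in σ..t, l s * Real.exp (∫ κ in τ..s, l κ))
      = Real.exp (∫ κ in τ..σ, l κ) * ∫ s in σ..t, l s * Real.exp (∫ κ in σ..s, l κ) := by
    rw [← intervalIntegral.integral_const_mul]
    apply integral_congr
    intro s _
    show l s * Real.exp (∫ κ in τ..s, l κ) = _
    rw [hsplit s, Real.exp_add]
    ring
  rw [heq, hsplit t, Real.exp_add]
  nlinarith [Real.exp_pos (∫ κ in τ..σ, l κ)]

/-- Lemma P: one-sided integration by parts for primitives. -/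
lemma gronwall_parts_le {f g : ℝ → ℝ} (hf : ∀ s, 0 ≤ f s) (hg : ∀ s, 0 ≤ g s)
    (hfi : ∀ a b, IntervalIntegrable f volume a b)
    (hgi : ∀ a b, IntervalIntegrable g volume a b) {a t : ℝ} (hat : a ≤ t) :
    (∫ s in a..t, f s * ∫ σ in a..s, g σ) + (∫ s in a..t, (∫ σ in a..s, f σ) * g s)
      ≤ (∫ s in a..t, f s) * ∫ σ in a..t, g σ := by
  have hFc : Continuous fun u => ∫ s in a..u, f s := continuous_primitive hfi a
  have hGc : Continuous fun u => ∫ s in a..u, g s := continuous_primitive hgi a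
  have hFmono := gronwall_primitive_mono hf hfi a
  have hGmono := gronwall_primitive_mono hg hgi a
  have hfGi : ∀ b c, IntervalIntegrable (fun s => f s * ∫ σ in a..s, g σ) volume b c :=
    fun b c => (hfi b c).mul_continuousOn hGc.continuousOn
  have hFgi : ∀ b c, IntervalIntegrable (fun s => (∫ σ in a..s, f σ) * g s) volume b c :=
    fun b c => (hgi b c).continuousOn_mul hFc.continuousOn
  have hD : (fun u => (∫ s in a..u, f s * ∫ σ in a..s, g σ)
      + (∫ s in a..u, (∫ σ in a..s, f σ) * g s)
      - (∫ s in a..u, f s) * ∫ σ in a..u, g σ) t ≤ 0 := by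
    apply gronwall_cont_ind (M := fun u => ∫ s in a..u, f s) hat
      (((continuous_primitive hfGi a).add (continuous_primitive hFgi a)).sub (hFc.mul hGc)) hFc
    · simp
    · simpa using sub_nonneg.2 (hFmono hat)
    · intro ε hε u hu
      have hc : ContinuousAt (fun u => ∫ s in a..u, g s) u := hGc.continuousAt
      rw [Metric.continuousAt_iff] at hc
      obtain ⟨δ, hδ, hball⟩ := hc ε hε
      refine ⟨δ / 2, by linarith, ?_⟩
      intro w hw hwb
      have huw : u ≤ w := hw.1.le
      have hdist : dist w u < δ := by
        rw [Real.dist_eq, abs_of_nonneg (by linarith [hw.1])]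
        linarith [hw.2]
      have hGwu : (∫ s in a..w, g s) - (∫ s in a..u, g s) ≤ ε := by
        have := hball hdist
        rw [Real.dist_eq] at this
        exact (le_abs_self _).trans this.le
      have hGuw : 0 ≤ (∫ s in a..w, g s) - ∫ s in a..u, g s := sub_nonneg.2 (hGmono huw)
      have hFuw : 0 ≤ (∫ s in a..w, f s) - ∫ s in a..u, f s := sub_nonneg.2 (hFmono huw)
      have hsplit1 := gronwall_primitive_sub hfGi a u w
      have hsplit2 := gronwall_primitive_sub hFgi a u w
      have hsplitF := gronwall_primitive_sub hfi a u w
      have hsplitG := gronwall_primitive_sub hgi a u w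
      have hb1 : (∫ s in u..w, f s * ∫ σ in a..s, g σ)
          ≤ (∫ s in a..w, g s) * ((∫ s in a..w, f s) - ∫ s in a..u, f s) := by
        have hmono : (∫ s in u..w, f s * ∫ σ in a..s, g σ)
            ≤ ∫ s in u..w, f s * ∫ σ in a..w, g σ := by
          refine integral_mono_on huw (hfGi u w) ((hfi u w).mul_const _) ?_
          intro x hx
          exact mul_le_mul_of_nonneg_left (hGmono hx.2) (hf x)
        rw [intervalIntegral.integral_mul_const, ← hsplitF] at hmono
        linarith [hmono]
      have hb2 : (∫ s in u..w, (∫ σ in a..s, f σ) * g s)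
          ≤ (∫ s in a..w, f s) * ((∫ s in a..w, g s) - ∫ s in a..u, g s) := by
        have hmono : (∫ s in u..w, (∫ σ in a..s, f σ) * g s)
            ≤ ∫ s in u..w, (∫ σ in a..w, f σ) * g s := by
          refine integral_mono_on huw (hFgi u w) ((hgi u w).const_mul _) ?_
          intro x hx
          exact mul_le_mul_of_nonneg_right (hFmono hx.2) (hg x)
        rw [intervalIntegral.integral_const_mul, ← hsplitG] at hmono
        linarith [hmono]
      have hprod : ((∫ s in a..w, f s) - ∫ s in a..u, f s)
            * ((∫ s in a..w, g s) - ∫ s in a..u, g s)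
          ≤ ((∫ s in a..w, f s) - ∫ s in a..u, f s) * ε :=
        mul_le_mul_of_nonneg_left hGwu hFuw
      simp only [Pi.add_apply, Pi.sub_apply, Pi.mul_apply]
      nlinarith [hb1, hb2, hprod]
  have hD' : (∫ s in a..t, f s * ∫ σ in a..s, g σ)
      + (∫ s in a..t, (∫ σ in a..s, f σ) * g s)
      - (∫ s in a..t, f s) * ∫ σ in a..t, g σ ≤ 0 := hD
  linarith

/-- Comparison lemma: a continuous subsolution of the homogeneous inequality is nonpositive. -/
lemma gronwall_comparison {τ δ' : ℝ} (hδ : 0 < δ') {l φ : ℝ → ℝ} (hl : ∀ s, 0 ≤ l s)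
    (hli : ∀ a b, IntervalIntegrable l volume a b) (hφ : Continuous φ)
    (h : ∀ t, τ ≤ t → φ t ≤ ∫ s in τ..t, Real.exp (-δ' * (t - s)) * l s * φ s) :
    ∀ t, τ ≤ t → φ t ≤ 0 := by
  have hψc : Continuous fun s => max (φ s) 0 := hφ.max continuous_const
  have hψnn : ∀ s, 0 ≤ l s * max (φ s) 0 := fun s => mul_nonneg (hl s) (le_max_right _ _)
  have hint : ∀ a b, IntervalIntegrable (fun s => l s * max (φ s) 0) volume a b :=
    fun a b => (hli a b).mul_continuousOn hψc.continuousOn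
  have hAc : Continuous fun u => ∫ s in τ..u, l s * max (φ s) 0 := continuous_primitive hint τ
  have hAmono := gronwall_primitive_mono hψnn hint τ
  have hA0 : ∀ u, τ ≤ u → 0 ≤ ∫ s in τ..u, l s * max (φ s) 0 :=
    fun u hu => integral_nonneg hu fun x _ => hψnn x
  have hφA : ∀ t, τ ≤ t → φ t ≤ ∫ s in τ..t, l s * max (φ s) 0 := by
    intro t ht
    refine (h t ht).trans (integral_mono_on ht ?_ (hint τ t) ?_)
    · exact ((hli τ t).continuousOn_mul
        (Real.continuous_exp.comp (by fun_prop)).continuousOn).mul_continuousOn hφ.continuousOn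
    · intro x hx
      rcases le_or_gt (φ x) 0 with hx0 | hx0
      · have h1 : Real.exp (-δ' * (t - x)) * l x * φ x ≤ 0 :=
          mul_nonpos_of_nonneg_of_nonpos (mul_nonneg (Real.exp_pos _).le (hl x)) hx0
        exact h1.trans (hψnn x)
      · have hE : Real.exp (-δ' * (t - x)) ≤ 1 := by
          rw [Real.exp_le_one_iff]
          nlinarith [hx.2]
        have : Real.exp (-δ' * (t - x)) * (l x * φ x) ≤ 1 * (l x * φ x) :=
          mul_le_mul_of_nonneg_right hE (mul_nonneg (hl x) hx0.le)
        rw [max_eq_left hx0.le]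
        nlinarith [this]
  intro b hb
  suffices hAb : (∫ s in τ..b, l s * max (φ s) 0) ≤ 0 by exact (hφA b hb).trans hAb
  have hsub : Set.Icc τ b ⊆ {u | (∫ s in τ..u, l s * max (φ s) 0) ≤ 0} := by
    apply ((isClosed_le hAc continuous_const).inter isClosed_Icc).Icc_subset_of_forall_exists_gt
    · show (∫ s in τ..τ, l s * max (φ s) 0) ≤ 0
      simp
    · rintro x ⟨hxs, hxτ, hxb⟩ y hy
      have hxs' : (∫ s in τ..x, l s * max (φ s) 0) ≤ 0 := hxs
      have hLc : ContinuousAt (fun u => ∫ s in x..u, l s) x := (continuous_primitive hli x).continuousAt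
      rw [Metric.continuousAt_iff] at hLc
      obtain ⟨δ, hδpos, hball⟩ := hLc (1/2) (by norm_num)
      set v := min (x + δ/2) (min y b) with hv
      have hxv : x < v := lt_min (by linarith) (lt_min hy hxb)
      have hvb : v ≤ b := le_trans (min_le_right _ _) (min_le_right _ _)
      have hvy : v ≤ y := (min_le_right _ _).trans (min_le_left _ _)
      have hmass : (∫ s in x..v, l s) ≤ 1/2 := by
        have hd : dist v x < δ := by
          rw [Real.dist_eq, abs_of_nonneg (by linarith)]
          have : v ≤ x + δ/2 := min_le_left _ _
          linarith
        have h2 := hball hd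
        rw [Real.dist_eq, integral_same, sub_zero] at h2
        exact (le_abs_self _).trans h2.le
      have hAsplit := gronwall_primitive_sub hint τ x v
      have hAv0 : 0 ≤ ∫ s in τ..v, l s * max (φ s) 0 := hA0 v (hxτ.trans hxv.le)
      have hb1 : (∫ s in x..v, l s * max (φ s) 0)
          ≤ (∫ s in x..v, l s) * ∫ s in τ..v, l s * max (φ s) 0 := by
        have hp : ∀ s' ∈ Set.Icc x v, l s' * max (φ s') 0
            ≤ l s' * ∫ s in τ..v, l s * max (φ s) 0 := by
          intro s' hs'
          have h1 : max (φ s') 0 ≤ ∫ s in τ..v, l s * max (φ s) 0 := by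
            have h2 : φ s' ≤ ∫ s in τ..s', l s * max (φ s) 0 := hφA s' (hxτ.trans hs'.1)
            have h3 : (∫ s in τ..s', l s * max (φ s) 0) ≤ ∫ s in τ..v, l s * max (φ s) 0 :=
              hAmono hs'.2
            exact max_le (h2.trans h3) hAv0
          exact mul_le_mul_of_nonneg_left h1 (hl s')
        have := integral_mono_on hxv.le (hint x v) ((hli x v).mul_const _) hp
        rwa [intervalIntegral.integral_mul_const] at this
      have hb2 : (∫ s in x..v, l s) * (∫ s in τ..v, l s * max (φ s) 0)
          ≤ (1/2) * ∫ s in τ..v, l s * max (φ s) 0 :=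
        mul_le_mul_of_nonneg_right hmass hAv0
      exact ⟨v, by simp only [Set.mem_setOf_eq]; linarith, hxv, hvy⟩
  exact hsub (Set.right_mem_Icc.2 hb)

lemma gronwall_main0 (τ C δ' : ℝ) (hC : 0 ≤ C) (hδ : 0 < δ')
    (Y : ℝ → ℝ) (hY : Continuous Y)
    (l : ℝ → ℝ) (hl : ∀ t, 0 ≤ l t) (hli : ∀ a b, IntervalIntegrable l volume a b)
    (hineq : ∀ t, τ ≤ t →
      Y t ≤ C + ∫ s in τ..t, Real.exp (-δ' * (t - s)) * l s * Y s) :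
    ∀ t, τ ≤ t →
      Y t ≤ C * (1 + ∫ s in τ..t, Real.exp (-δ' * (t - s) + ∫ κ in s..t, l κ) * l s) := by
  have hLc : Continuous fun u => ∫ κ in τ..u, l κ := continuous_primitive hli τ
  have hLmono := gronwall_primitive_mono hl hli τ
  have hgc : Continuous fun σ => Real.exp (δ' * σ - ∫ κ in τ..σ, l κ) :=
    Real.continuous_exp.comp ((continuous_const.mul continuous_id).sub hLc)
  have hgnn : ∀ σ, 0 ≤ Real.exp (δ' * σ - ∫ κ in τ..σ, l κ) * l σ :=
    fun σ => mul_nonneg (Real.exp_pos _).le (hl σ)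
  have hgi : ∀ a b, IntervalIntegrable
      (fun σ => Real.exp (δ' * σ - ∫ κ in τ..σ, l κ) * l σ) volume a b :=
    fun a b => (hli a b).continuousOn_mul hgc.continuousOn
  have hPc : Continuous fun u => ∫ σ in τ..u, Real.exp (δ' * σ - ∫ κ in τ..σ, l κ) * l σ :=
    continuous_primitive hgi τ
  have hfnn : ∀ s, 0 ≤ l s * Real.exp (∫ κ in τ..s, l κ) :=
    fun s => mul_nonneg (hl s) (Real.exp_pos _).le
  have hfi : ∀ a b, IntervalIntegrable
      (fun s => l s * Real.exp (∫ κ in τ..s, l κ)) volume a b :=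
    fun a b => (hli a b).mul_continuousOn (Real.continuous_exp.comp hLc).continuousOn
  set B : ℝ → ℝ := fun u => C * (1 + Real.exp (-δ' * u + ∫ κ in τ..u, l κ)
      * ∫ σ in τ..u, Real.exp (δ' * σ - ∫ κ in τ..σ, l κ) * l σ) with hB
  have hBc : Continuous B := by
    rw [hB]
    exact continuous_const.mul (continuous_const.add
      ((Real.continuous_exp.comp ((continuous_const.mul continuous_id).add hLc)).mul hPc))
  have step1 : ∀ u : ℝ, (∫ s in τ..u, Real.exp (-δ' * (u - s) + ∫ κ in s..u, l κ) * l s)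
      = Real.exp (-δ' * u + ∫ κ in τ..u, l κ)
        * ∫ σ in τ..u, Real.exp (δ' * σ - ∫ κ in τ..σ, l κ) * l σ := by
    intro u
    rw [← intervalIntegral.integral_const_mul]
    apply integral_congr
    intro s _
    show Real.exp (-δ' * (u - s) + ∫ κ in s..u, l κ) * l s = _
    have hadj : (∫ κ in τ..s, l κ) + ∫ κ in s..u, l κ = ∫ κ in τ..u, l κ :=
      integral_add_adjacent_intervals (hli τ s) (hli s u)
    have h1 : (∫ κ in s..u, l κ) = (∫ κ in τ..u, l κ) - ∫ κ in τ..s, l κ := by linarith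
    rw [h1]
    have h2 : -δ' * (u - s) + ((∫ κ in τ..u, l κ) - ∫ κ in τ..s, l κ)
        = (-δ' * u + ∫ κ in τ..u, l κ) + (δ' * s - ∫ κ in τ..s, l κ) := by ring
    rw [h2, Real.exp_add, mul_assoc]
  have step2 : ∀ u, τ ≤ u →
      C + (∫ s in τ..u, Real.exp (-δ' * (u - s)) * l s * B s) ≤ B u := by
    intro u hu
    have e1 : ∀ s : ℝ, Real.exp (-δ' * (u - s)) * l s * B s
        = C * Real.exp (-δ' * u) * (Real.exp (δ' * s) * l s)
          + C * Real.exp (-δ' * u) * ((l s * Real.exp (∫ κ in τ..s, l κ))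
              * ∫ σ in τ..s, Real.exp (δ' * σ - ∫ κ in τ..σ, l κ) * l σ) := by
      intro s
      simp only [hB]
      have h1 : Real.exp (-δ' * (u - s)) = Real.exp (-δ' * u) * Real.exp (δ' * s) := by
        rw [← Real.exp_add]; ring_nf
      have h2 : Real.exp (-δ' * (u - s)) * Real.exp (-δ' * s + ∫ κ in τ..s, l κ)
          = Real.exp (-δ' * u) * Real.exp (∫ κ in τ..s, l κ) := by
        rw [← Real.exp_add, ← Real.exp_add]; ring_nf
      linear_combination (l s * C) * h1
        + (l s * C * (∫ σ in τ..s, Real.exp (δ' * σ - ∫ κ in τ..σ, l κ) * l σ)) * h2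
    have hI1 : IntervalIntegrable
        (fun s => C * Real.exp (-δ' * u) * (Real.exp (δ' * s) * l s)) volume τ u :=
      ((hli τ u).continuousOn_mul
        (Real.continuous_exp.comp (continuous_const.mul continuous_id)).continuousOn).const_mul _
    have hI2 : IntervalIntegrable (fun s => C * Real.exp (-δ' * u)
        * ((l s * Real.exp (∫ κ in τ..s, l κ))
            * ∫ σ in τ..s, Real.exp (δ' * σ - ∫ κ in τ..σ, l κ) * l σ)) volume τ u :=
      ((hfi τ u).mul_continuousOn hPc.continuousOn).const_mul _
    have hsplit : (∫ s in τ..u, Real.exp (-δ' * (u - s)) * l s * B s)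
        = C * Real.exp (-δ' * u) * (∫ s in τ..u, Real.exp (δ' * s) * l s)
          + C * Real.exp (-δ' * u) * ∫ s in τ..u, (l s * Real.exp (∫ κ in τ..s, l κ))
              * ∫ σ in τ..s, Real.exp (δ' * σ - ∫ κ in τ..σ, l κ) * l σ := by
      simp only [e1]
      rw [integral_add hI1 hI2, intervalIntegral.integral_const_mul, intervalIntegral.integral_const_mul]
    have hparts := gronwall_parts_le hfnn hgnn hfi hgi hu
    have hFg : IntervalIntegrable (fun s => (∫ σ in τ..s, l σ * Real.exp (∫ κ in τ..σ, l κ))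
        * (Real.exp (δ' * s - ∫ κ in τ..s, l κ) * l s)) volume τ u :=
      (hgi τ u).continuousOn_mul (continuous_primitive hfi τ).continuousOn
    have hFP : (∫ s in τ..u, (l s * Real.exp (∫ κ in τ..s, l κ))
          * ∫ σ in τ..s, Real.exp (δ' * σ - ∫ κ in τ..σ, l κ) * l σ)
        ≤ ∫ s in τ..u, ((∫ σ in τ..u, l σ * Real.exp (∫ κ in τ..σ, l κ))
            - ∫ σ in τ..s, l σ * Real.exp (∫ κ in τ..σ, l κ))
            * (Real.exp (δ' * s - ∫ κ in τ..s, l κ) * l s) := by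
      have hrhs : (∫ s in τ..u, ((∫ σ in τ..u, l σ * Real.exp (∫ κ in τ..σ, l κ))
            - ∫ σ in τ..s, l σ * Real.exp (∫ κ in τ..σ, l κ))
            * (Real.exp (δ' * s - ∫ κ in τ..s, l κ) * l s))
          = (∫ σ in τ..u, l σ * Real.exp (∫ κ in τ..σ, l κ))
              * (∫ σ in τ..u, Real.exp (δ' * σ - ∫ κ in τ..σ, l κ) * l σ)
            - ∫ s in τ..u, (∫ σ in τ..s, l σ * Real.exp (∫ κ in τ..σ, l κ))
                * (Real.exp (δ' * s - ∫ κ in τ..s, l κ) * l s) := by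
        have e2 : ∀ s : ℝ, ((∫ σ in τ..u, l σ * Real.exp (∫ κ in τ..σ, l κ))
              - ∫ σ in τ..s, l σ * Real.exp (∫ κ in τ..σ, l κ))
              * (Real.exp (δ' * s - ∫ κ in τ..s, l κ) * l s)
            = (∫ σ in τ..u, l σ * Real.exp (∫ κ in τ..σ, l κ))
                * (Real.exp (δ' * s - ∫ κ in τ..s, l κ) * l s)
              - (∫ σ in τ..s, l σ * Real.exp (∫ κ in τ..σ, l κ))
                * (Real.exp (δ' * s - ∫ κ in τ..s, l κ) * l s) := fun s => by ring
        simp only [e2]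
        rw [integral_sub ((hgi τ u).const_mul _) hFg, intervalIntegral.integral_const_mul]
      rw [hrhs]
      linarith [hparts]
    have hmono2 : (∫ s in τ..u, ((∫ σ in τ..u, l σ * Real.exp (∫ κ in τ..σ, l κ))
            - ∫ σ in τ..s, l σ * Real.exp (∫ κ in τ..σ, l κ))
            * (Real.exp (δ' * s - ∫ κ in τ..s, l κ) * l s))
        ≤ ∫ s in τ..u, (Real.exp (∫ κ in τ..u, l κ) - Real.exp (∫ κ in τ..s, l κ))
            * (Real.exp (δ' * s - ∫ κ in τ..s, l κ) * l s) := by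
      refine integral_mono_on hu ?_ ?_ ?_
      · exact (hgi τ u).continuousOn_mul
          ((continuous_const.sub (continuous_primitive hfi τ)).continuousOn)
      · exact (hgi τ u).continuousOn_mul
          ((continuous_const.sub (Real.continuous_exp.comp hLc)).continuousOn)
      · intro s hs
        have h1 : (∫ σ in τ..u, l σ * Real.exp (∫ κ in τ..σ, l κ))
            - ∫ σ in τ..s, l σ * Real.exp (∫ κ in τ..σ, l κ)
            = ∫ σ in s..u, l σ * Real.exp (∫ κ in τ..σ, l κ) :=
          gronwall_primitive_sub hfi τ s u
        have h2 := gronwall_exp_primitive_le' hl hli hs.1 hs.2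
        rw [h1]
        exact mul_le_mul_of_nonneg_right h2 (hgnn s)
    have hcomp : (∫ s in τ..u, (Real.exp (∫ κ in τ..u, l κ) - Real.exp (∫ κ in τ..s, l κ))
            * (Real.exp (δ' * s - ∫ κ in τ..s, l κ) * l s))
        = Real.exp (∫ κ in τ..u, l κ)
            * (∫ σ in τ..u, Real.exp (δ' * σ - ∫ κ in τ..σ, l κ) * l σ)
          - ∫ s in τ..u, Real.exp (δ' * s) * l s := by
      have e3 : ∀ s : ℝ, (Real.exp (∫ κ in τ..u, l κ) - Real.exp (∫ κ in τ..s, l κ))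
            * (Real.exp (δ' * s - ∫ κ in τ..s, l κ) * l s)
          = Real.exp (∫ κ in τ..u, l κ) * (Real.exp (δ' * s - ∫ κ in τ..s, l κ) * l s)
            - Real.exp (δ' * s) * l s := by
        intro s
        have h4 : Real.exp (∫ κ in τ..s, l κ) * Real.exp (δ' * s - ∫ κ in τ..s, l κ)
            = Real.exp (δ' * s) := by rw [← Real.exp_add]; ring_nf
        linear_combination (-(l s)) * h4
      have hEl : IntervalIntegrable (fun s => Real.exp (δ' * s) * l s) volume τ u :=
        (hli τ u).continuousOn_mul
          (Continuous.continuousOn (by fun_prop : Continuous fun s : ℝ => Real.exp (δ' * s)))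
      simp only [e3]
      rw [integral_sub ((hgi τ u).const_mul _) hEl, intervalIntegral.integral_const_mul]
    have hfinal : (∫ s in τ..u, (l s * Real.exp (∫ κ in τ..s, l κ))
          * ∫ σ in τ..s, Real.exp (δ' * σ - ∫ κ in τ..σ, l κ) * l σ)
        ≤ Real.exp (∫ κ in τ..u, l κ)
            * (∫ σ in τ..u, Real.exp (δ' * σ - ∫ κ in τ..σ, l κ) * l σ)
          - ∫ s in τ..u, Real.exp (δ' * s) * l s := by
      rw [← hcomp]
      exact hFP.trans hmono2
    have hCE : (0:ℝ) ≤ C * Real.exp (-δ' * u) := mul_nonneg hC (Real.exp_pos _).le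
    have hmul := mul_le_mul_of_nonneg_left hfinal hCE
    have hexpadd : Real.exp (-δ' * u + ∫ κ in τ..u, l κ)
        = Real.exp (-δ' * u) * Real.exp (∫ κ in τ..u, l κ) := Real.exp_add _ _
    rw [hsplit]
    simp only [hB]
    rw [hexpadd]
    nlinarith [hmul]
  have hφineq : ∀ t, τ ≤ t →
      Y t - B t ≤ ∫ s in τ..t, Real.exp (-δ' * (t - s)) * l s * (Y s - B s) := by
    intro t ht
    have h1 := hineq t ht
    have h2 := step2 t ht
    have hIY : IntervalIntegrable (fun s => Real.exp (-δ' * (t - s)) * l s * Y s) volume τ t :=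
      ((hli τ t).continuousOn_mul
        (Real.continuous_exp.comp (by fun_prop)).continuousOn).mul_continuousOn hY.continuousOn
    have hIB : IntervalIntegrable (fun s => Real.exp (-δ' * (t - s)) * l s * B s) volume τ t :=
      ((hli τ t).continuousOn_mul
        (Real.continuous_exp.comp (by fun_prop)).continuousOn).mul_continuousOn hBc.continuousOn
    have hsub : (∫ s in τ..t, Real.exp (-δ' * (t - s)) * l s * (Y s - B s))
        = (∫ s in τ..t, Real.exp (-δ' * (t - s)) * l s * Y s)
          - ∫ s in τ..t, Real.exp (-δ' * (t - s)) * l s * B s := by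
      rw [← integral_sub hIY hIB]
      apply integral_congr
      intro s _
      show Real.exp (-δ' * (t - s)) * l s * (Y s - B s) = _
      ring
    linarith
  intro t ht
  have hcmp := gronwall_comparison hδ hl hli (φ := fun u => Y u - B u) (hY.sub hBc) hφineq t ht
  rw [step1 t]
  have hBt : B t = C * (1 + Real.exp (-δ' * t + ∫ κ in τ..t, l κ)
      * ∫ σ in τ..t, Real.exp (δ' * σ - ∫ κ in τ..σ, l κ) * l σ) := by rw [hB]
  linarith

/-- A Gronwall-type lemma with exponentially decaying kernel: if `Y` is
continuous on `[τ,∞)`, `C ≥ 0`, `δ' > 0`, `l ≥ 0` is locally integrable on `[τ,∞)` and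
`Y t ≤ C + ∫_τ^t e^{-δ'(t-s)} l(s) Y(s) ds` for all `t ≥ τ`, then
`Y t ≤ C (1 + ∫_τ^t e^{-δ'(t-s) + ∫_s^t l(κ)dκ} l(s) ds)` for all `t ≥ τ`. -/
theorem gronwall_exponential_kernel (τ C δ' : ℝ) (hC : 0 ≤ C) (hδ : 0 < δ')
    (Y : ℝ → ℝ) (hY : ContinuousOn Y (Set.Ici τ))
    (l : ℝ → ℝ) (hl : ∀ t, 0 ≤ l t) (hlint : LocallyIntegrableOn l (Set.Ici τ))
    (hineq : ∀ t, τ ≤ t →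
      Y t ≤ C + ∫ s in τ..t, Real.exp (-δ' * (t - s)) * l s * Y s) :
    ∀ t, τ ≤ t →
      Y t ≤ C * (1 + ∫ s in τ..t, Real.exp (-δ' * (t - s) + ∫ κ in s..t, l κ) * l s) := by
  intro t ht
  set l₀ : ℝ → ℝ := (Set.Ici τ).indicator l with hl₀
  have hl₀nn : ∀ s, 0 ≤ l₀ s := fun s => Set.indicator_nonneg (fun x _ => hl x) s
  have hl₀eq : ∀ x, τ ≤ x → l₀ x = l x := fun x hx => Set.indicator_of_mem hx l
  have hl₀int : ∀ a b, IntervalIntegrable l₀ volume a b := by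
    intro a b
    have hsub : Set.Ici τ ∩ Set.uIoc a b ⊆ Set.Icc τ (max a b) := by
      rintro x ⟨hx1, hx2⟩
      refine ⟨hx1, ?_⟩
      rcases Set.mem_uIoc.1 hx2 with h | h
      · exact h.2.trans (le_max_right a b)
      · exact h.2.trans (le_max_left a b)
    rw [intervalIntegrable_iff, IntegrableOn, hl₀,
      integrable_indicator_iff measurableSet_Ici, IntegrableOn,
      Measure.restrict_restrict measurableSet_Ici]
    have hcomp : IntegrableOn l (Set.Icc τ (max a b)) volume :=
      hlint.integrableOn_compact_subset Set.Icc_subset_Ici_self isCompact_Icc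
    exact hcomp.mono_set hsub
  set Y₀ : ℝ → ℝ := fun x => Y (max x τ) with hY₀
  have hY₀c : Continuous Y₀ :=
    hY.comp_continuous (continuous_id.max continuous_const) fun x => le_max_right x τ
  have hY₀eq : ∀ x, τ ≤ x → Y₀ x = Y x := fun x hx => by
    simp only [hY₀, max_eq_left hx]
  have hineq₀ : ∀ u, τ ≤ u →
      Y₀ u ≤ C + ∫ s in τ..u, Real.exp (-δ' * (u - s)) * l₀ s * Y₀ s := by
    intro u hu
    rw [hY₀eq u hu]
    refine (hineq u hu).trans (le_of_eq ?_)
    congr 1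
    apply integral_congr
    intro s hs
    rw [Set.uIcc_of_le hu] at hs
    show Real.exp (-δ' * (u - s)) * l s * Y s = Real.exp (-δ' * (u - s)) * l₀ s * Y₀ s
    rw [hl₀eq s hs.1, hY₀eq s hs.1]
  have key := gronwall_main0 τ C δ' hC hδ Y₀ hY₀c l₀ hl₀nn hl₀int hineq₀ t ht
  have hconv : (∫ s in τ..t, Real.exp (-δ' * (t - s) + ∫ κ in s..t, l₀ κ) * l₀ s)
      = ∫ s in τ..t, Real.exp (-δ' * (t - s) + ∫ κ in s..t, l κ) * l s := by
    apply integral_congr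
    intro s hs
    rw [Set.uIcc_of_le ht] at hs
    have hinner : (∫ κ in s..t, l₀ κ) = ∫ κ in s..t, l κ := by
      apply integral_congr
      intro κ hκ
      rw [Set.uIcc_of_le hs.2] at hκ
      exact hl₀eq κ (hs.1.trans hκ.1)
    show Real.exp (-δ' * (t - s) + ∫ κ in s..t, l₀ κ) * l₀ s = _
    rw [hinner, hl₀eq s hs.1]
  rw [hconv] at key
  rw [← hY₀eq t ht]
  exact key
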